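/- arXiv:1210.4350 — 2 statements merged into one kernel-verified Lean document; each statement's English description precedes it below -/
import Mathlib

section
/- Let q be continuous on [−1,1], s ∈ ℂ with t = Im s, and φ the solution of −u'' + qu = s²u with φ(−1) = α₂ ≠ 0, φ'(−1) = −α₁. Then there exist constants C, S₀ > 0 such that for all |s| ≥ S₀ and all x ∈ [−1,1]: |φ(x) − α₂ cos(s(x+1))| ≤ C·|s|⁻¹·e^{|t|(x+1)}. -/
open Complex Set

private lemma quadA (σ t fr fi pr pi : ℝ) (ht : 0 ≤ t) :
    2*t^2*(fr*pr+fi*pi) + 2*σ*t*(pr*fi - pi*fr)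
      ≤ t*((σ^2+t^2)*(fr^2+fi^2) + (pr^2+pi^2)) := by
  rcases eq_or_lt_of_le ht with h | h
  · rw [← h]; ring_nf; rfl
  · have hpos : 0 < t*(σ^2+t^2) := by positivity
    nlinarith [sq_nonneg (t*(σ^2+t^2)*fr - t^2*pr + σ*t*pi),
      sq_nonneg (t*(σ^2+t^2)*fi - t^2*pi - σ*t*pr), hpos]

private lemma energy_ineq (σ t qx M ur ui fr fi pr pi wr wi : ℝ)
    (hqM : qx^2 ≤ M^2)
    (hwr : wr = qx*ur - ((σ^2-t^2)*fr - 2*σ*t*fi))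
    (hwi : wi = qx*ui - (2*σ*t*fr + (σ^2-t^2)*fi)) :
    2*(σ^2+t^2)*(fr*pr+fi*pi) + 2*(pr*wr+pi*wi)
      ≤ 2 * |t| * ((σ^2+t^2)*(fr^2+fi^2)+(pr^2+pi^2)) + (pr^2+pi^2) + M^2*(ur^2+ui^2) := by
  subst hwr hwi
  have h2 : 2*qx*(pr*ur+pi*ui) ≤ (pr^2+pi^2) + M^2*(ur^2+ui^2) := by
    nlinarith [sq_nonneg (qx*ur - pr), sq_nonneg (qx*ui - pi), sq_nonneg ur, sq_nonneg ui, hqM]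
  rcases le_total 0 t with h | h
  · have h1 := quadA σ t fr fi pr pi h
    rw [_root_.abs_of_nonneg h]; nlinarith [h1, h2]
  · have h1 := quadA σ (-t) fi fr pi pr (by linarith)
    rw [_root_.abs_of_nonpos h]; nlinarith [h1, h2]

private lemma energy_hasDerivAt {u p : ℝ → ℂ} {du dp : ℂ} (N2 : ℝ) {x : ℝ}
    (hu : HasDerivAt u du x) (hp : HasDerivAt p dp x) :
    HasDerivAt (fun y => N2*((u y).re^2+(u y).im^2) + ((p y).re^2+(p y).im^2))
      (N2*(2*((u x).re*du.re) + 2*((u x).im*du.im))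
        + (2*((p x).re*dp.re) + 2*((p x).im*dp.im))) x := by
  have hur : HasDerivAt (fun y => (u y).re) du.re x :=
    Complex.reCLM.hasFDerivAt.comp_hasDerivAt x hu
  have hui : HasDerivAt (fun y => (u y).im) du.im x :=
    Complex.imCLM.hasFDerivAt.comp_hasDerivAt x hu
  have hpr : HasDerivAt (fun y => (p y).re) dp.re x :=
    Complex.reCLM.hasFDerivAt.comp_hasDerivAt x hp
  have hpi : HasDerivAt (fun y => (p y).im) dp.im x :=
    Complex.imCLM.hasFDerivAt.comp_hasDerivAt x hp
  have h := (((hur.pow 2).add (hui.pow 2)).const_mul N2).add ((hpr.pow 2).add (hpi.pow 2))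
  refine h.congr_deriv ?_
  push_cast
  ring

private lemma decay {E E' : ℝ → ℝ} {c B : ℝ}
    (hE : ∀ y ∈ Icc (-1:ℝ) 1, HasDerivAt E (E' y) y)
    (hbound : ∀ y ∈ Ioo (-1:ℝ) 1, E' y ≤ c * E y + B * Real.exp (c*(y+1))) :
    ∀ x ∈ Icc (-1:ℝ) 1, E x ≤ (E (-1) + B*(x+1)) * Real.exp (c*(x+1)) := by
  have hexp1 : ∀ y : ℝ, Real.exp (c*(y+1)) * Real.exp (-(c*(y+1))) = 1 := by
    intro y; rw [← Real.exp_add]; simp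
  have hR : ∀ y ∈ Icc (-1:ℝ) 1,
      HasDerivAt (fun y => E y * Real.exp (-(c*(y+1))) - B*(y+1))
        (E' y * Real.exp (-(c*(y+1))) + E y * (Real.exp (-(c*(y+1))) * (-c)) - B) y := by
    intro y hy
    have hinner : HasDerivAt (fun y : ℝ => -(c*(y+1))) (-c) y := by
      exact (((hasDerivAt_id y).add_const 1).const_mul c).neg.congr_deriv (by ring)
    have hexp := hinner.exp
    have hlin : HasDerivAt (fun y : ℝ => B*(y+1)) B y := by
      simpa using ((hasDerivAt_id y).add_const 1).const_mul B
    exact ((hE y hy).mul hexp).sub hlin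
  have hant : AntitoneOn (fun y => E y * Real.exp (-(c*(y+1))) - B*(y+1)) (Icc (-1:ℝ) 1) := by
    apply antitoneOn_of_deriv_nonpos (convex_Icc _ _)
    · exact fun y hy => ((hR y hy).continuousAt).continuousWithinAt
    · intro y hy
      rw [interior_Icc] at hy
      exact ((hR y (Ioo_subset_Icc_self hy)).differentiableAt).differentiableWithinAt
    · intro y hy
      rw [interior_Icc] at hy
      rw [(hR y (Ioo_subset_Icc_self hy)).deriv]
      have hb := hbound y hy
      have he := Real.exp_pos (-(c*(y+1)))
      have h3 : E' y - c * E y ≤ B * Real.exp (c*(y+1)) := by linarith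
      have h4 := mul_le_mul_of_nonneg_right h3 he.le
      have he2 : B * Real.exp (c*(y+1)) * Real.exp (-(c*(y+1))) = B := by
        rw [mul_assoc, hexp1 y, mul_one]
      nlinarith [h4, he2]
  intro x hx
  have h1 := hant (left_mem_Icc.mpr (by norm_num)) hx hx.1
  simp only [neg_add_cancel, mul_zero, neg_zero, Real.exp_zero, mul_one] at h1
  have h1' : E x * Real.exp (-(c*(x+1))) ≤ E (-1) + B*(x+1) := by linarith
  have h4 := mul_le_mul_of_nonneg_right h1' (Real.exp_pos (c*(x+1))).le
  have he3 : E x * Real.exp (-(c*(x+1))) * Real.exp (c*(x+1)) = E x := by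
    rw [mul_assoc, mul_comm (Real.exp (-(c*(x+1)))), hexp1 x, mul_one]
  linarith [h4, he3.ge, he3.le]

private lemma normsq_complex (z : ℂ) : ‖z‖^2 = z.re^2 + z.im^2 := by
  rw [Complex.sq_norm, Complex.normSq_apply]; ring

private lemma energy_bound2 (s : ℂ) (qx M T K2e : ℝ) (U F P W : ℂ)
    (hq2 : qx^2 ≤ M^2) (hT : T = |s.im|)
    (hW : W = (qx:ℂ) * U - s^2 * F)
    (hU : U.re^2 + U.im^2 ≤ K2e) (hM0 : 0 ≤ M^2) :
    (s.re^2+s.im^2)*(2*(F.re*P.re) + 2*(F.im*P.im)) + (2*(P.re*W.re)+2*(P.im*W.im))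
      ≤ (2*T+1) * ((s.re^2+s.im^2)*(F.re^2+F.im^2) + (P.re^2+P.im^2)) + M^2*K2e := by
  have hsre : (s^2).re = s.re^2 - s.im^2 := by simp [pow_two, Complex.mul_re]
  have hsim : (s^2).im = 2*s.re*s.im := by simp [pow_two, Complex.mul_im]; ring
  have hwr : W.re = qx * U.re - ((s.re^2-s.im^2)*F.re - 2*s.re*s.im*F.im) := by
    rw [hW]
    simp only [Complex.sub_re, Complex.mul_re, Complex.ofReal_re, Complex.ofReal_im,
      hsre, hsim]
    ring
  have hwi : W.im = qx * U.im - (2*s.re*s.im*F.re + (s.re^2-s.im^2)*F.im) := by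
    rw [hW]
    simp only [Complex.sub_im, Complex.mul_im, Complex.ofReal_re, Complex.ofReal_im,
      hsre, hsim]
    ring
  have key := energy_ineq s.re s.im qx M U.re U.im F.re F.im P.re P.im W.re W.im hq2 hwr hwi
  rw [← hT] at key
  have hMU := mul_le_mul_of_nonneg_left hU hM0
  nlinarith [key, hMU, sq_nonneg F.re, sq_nonneg F.im,
    mul_nonneg (by positivity : (0:ℝ) ≤ s.re^2+s.im^2)
      (by positivity : (0:ℝ) ≤ F.re^2+F.im^2)]

set_option maxHeartbeats 1000000 in
/-- Asymptotics of the fundamental solution when `α₂ ≠ 0`: if for each `s` the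
function `φ s` solves `−u'' + qu = s²u` with `φ(−1) = α₂`, `φ'(−1) = −α₁`,
then `φ(x) = α₂ cos(s(x+1)) + O(|s|⁻¹ e^{|Im s|(x+1)})` uniformly on `[−1,1]`. -/
theorem solution_asymptotics_alpha2_ne_zero
    (q : ℝ → ℝ) (hq : ContinuousOn q (Set.Icc (-1) 1))
    (α₁ α₂ : ℝ) (hα₂ : α₂ ≠ 0)
    (φ φ' φ'' : ℂ → ℝ → ℂ)
    (hφ : ∀ s, ∀ x ∈ Set.Icc (-1:ℝ) 1, HasDerivAt (φ s) (φ' s x) x)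
    (hφ' : ∀ s, ∀ x ∈ Set.Icc (-1:ℝ) 1, HasDerivAt (φ' s) (φ'' s x) x)
    (hode : ∀ s, ∀ x ∈ Set.Icc (-1:ℝ) 1,
      -φ'' s x + (q x : ℂ) * φ s x = s ^ 2 * φ s x)
    (hinit : ∀ s, φ s (-1) = (α₂ : ℂ)) (hinit' : ∀ s, φ' s (-1) = -(α₁ : ℂ)) :
    ∃ C S₀ : ℝ, 0 < C ∧ 0 < S₀ ∧
      ∀ s : ℂ, S₀ ≤ ‖s‖ → ∀ x ∈ Set.Icc (-1:ℝ) 1,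
        ‖φ s x - (α₂ : ℂ) * Complex.cos (s * (x + 1))‖
          ≤ C * ‖s‖⁻¹ * Real.exp (|s.im| * (x + 1)) := by
  obtain ⟨M0, hM0⟩ := isCompact_Icc.exists_bound_of_continuousOn hq
  set M : ℝ := max M0 1 with hMdef
  have hM1 : (1:ℝ) ≤ M := le_max_right _ _
  have hqM : ∀ y ∈ Icc (-1:ℝ) 1, (q y)^2 ≤ M^2 := by
    intro y hy
    have h1 : |q y| ≤ M := le_trans (hM0 y hy) (le_max_left _ _)
    nlinarith [abs_nonneg (q y), _root_.sq_abs (q y)]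
  set K2 : ℝ := (α₂^2 + α₁^2) * Real.exp 4 with hK2def
  have hK2 : 0 < K2 := by positivity
  set C1 : ℝ := (α₁^2 + 2*M^2*K2) * Real.exp 4 with hC1def
  have hC1 : 0 < C1 := by positivity
  refine ⟨Real.sqrt C1, M, Real.sqrt_pos.mpr hC1, by linarith, ?_⟩
  intro s hs x hx
  set T : ℝ := |s.im| with hTdef
  have hT0 : 0 ≤ T := abs_nonneg _
  set c : ℝ := 2*T + 2 with hcdef
  have hN2 : ‖s‖^2 = s.re^2 + s.im^2 := by
    rw [Complex.sq_norm, Complex.normSq_apply]; ring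
  have hNpos : (0:ℝ) < ‖s‖ := lt_of_lt_of_le (by linarith) hs
  have hN1 : (1:ℝ) ≤ ‖s‖ := le_trans hM1 hs
  have hNN1 : (1:ℝ) ≤ s.re^2+s.im^2 := by nlinarith [hN2, hN1]
  have hMNN : M^2 ≤ s.re^2+s.im^2 := by nlinarith [hs, hM1]
  have hsre : (s^2).re = s.re^2 - s.im^2 := by simp [pow_two, Complex.mul_re]
  have hsim : (s^2).im = 2*s.re*s.im := by simp [pow_two, Complex.mul_im]; ring
  have hppf : ∀ y ∈ Icc (-1:ℝ) 1, φ'' s y = (q y:ℂ) * φ s y - s^2 * φ s y := by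
    intro y hy
    linear_combination -(hode s y hy)
  -- Step A : a priori bound on the solution
  have hEAbound : ∀ y ∈ Ioo (-1:ℝ) 1,
      (s.re^2+s.im^2)*(2*((φ s y).re*(φ' s y).re) + 2*((φ s y).im*(φ' s y).im))
        + (2*((φ' s y).re*(φ'' s y).re) + 2*((φ' s y).im*(φ'' s y).im))
      ≤ c * ((s.re^2+s.im^2)*((φ s y).re^2+(φ s y).im^2) + ((φ' s y).re^2+(φ' s y).im^2))
        + 0 * Real.exp (c*(y+1)) := by
    intro y hy
    have hyI := Ioo_subset_Icc_self hy
    have hq2 := hqM y hyI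
    have hW : φ'' s y = (q y:ℂ) * φ s y - s^2 * φ s y := hppf y hyI
    have key := energy_bound2 s (q y) M T ((φ s y).re^2+(φ s y).im^2)
      (φ s y) (φ s y) (φ' s y) (φ'' s y) hq2 hTdef hW le_rfl (by positivity)
    rw [hcdef]
    linarith [key, mul_le_mul_of_nonneg_right hMNN
        (by positivity : (0:ℝ) ≤ (φ s y).re^2+(φ s y).im^2),
      sq_nonneg (φ' s y).re, sq_nonneg (φ' s y).im]
  have hEAfin := decay (fun y hy => energy_hasDerivAt (s.re^2+s.im^2) (hφ s y hy) (hφ' s y hy))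
    hEAbound
  have huB : ∀ y ∈ Icc (-1:ℝ) 1,
      (φ s y).re^2+(φ s y).im^2 ≤ K2 * Real.exp (2*T*(y+1)) := by
    intro y hy
    have h1 := hEAfin y hy
    simp only [hinit s, hinit' s, Complex.ofReal_re, Complex.ofReal_im, Complex.neg_re,
      Complex.neg_im, zero_mul, add_zero, neg_zero, neg_neg] at h1
    have hsplit : Real.exp (c*(y+1)) ≤ Real.exp 4 * Real.exp (2*T*(y+1)) := by
      rw [← Real.exp_add]
      apply Real.exp_le_exp.mpr
      rw [hcdef]
      linarith [hy.1, hy.2]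
    have hcoefnn : (0:ℝ) ≤ (s.re^2+s.im^2)*α₂^2+α₁^2 := by positivity
    have h2 : (s.re^2+s.im^2) * ((φ s y).re^2+(φ s y).im^2)
        ≤ ((s.re^2+s.im^2)*α₂^2+α₁^2) * Real.exp (c*(y+1)) := by
      linarith [h1, sq_nonneg (φ' s y).re, sq_nonneg (φ' s y).im]
    have h3 := mul_le_mul_of_nonneg_left hsplit hcoefnn
    have hcoef2 : (s.re^2+s.im^2)*α₂^2+α₁^2 ≤ (s.re^2+s.im^2)*(α₂^2+α₁^2) := by
      linarith [mul_nonneg (by linarith [hNN1] : (0:ℝ) ≤ s.re^2+s.im^2-1) (sq_nonneg α₁)]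
    have h4 := mul_le_mul_of_nonneg_right hcoef2
      (by positivity : (0:ℝ) ≤ Real.exp 4 * Real.exp (2*T*(y+1)))
    have hh2 : (s.re^2+s.im^2) * ((φ s y).re^2+(φ s y).im^2)
        ≤ (s.re^2+s.im^2) * (K2 * Real.exp (2*T*(y+1))) := by
      rw [hK2def]
      linarith [h2, h3, h4]
    exact le_of_mul_le_mul_left hh2 (by linarith [hNN1])
  -- Step B : the difference with the cosine
  have hcos : ∀ y : ℝ, HasDerivAt (fun y : ℝ => Complex.cos (s*((y:ℂ)+1)))
      (-Complex.sin (s*((y:ℂ)+1)) * s) y := by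
    intro y
    have h1 : HasDerivAt (fun y : ℝ => s * ((y:ℂ)+1)) s y := by
      simpa using ((Complex.ofRealCLM.hasDerivAt (x := y)).add_const 1).const_mul s
    have h2 := ((Complex.hasDerivAt_cos (s*((y:ℂ)+1))).hasFDerivAt.restrictScalars
      ℝ).comp_hasDerivAt y h1
    exact h2.congr_deriv (by simp [mul_comm])
  have hsin : ∀ y : ℝ, HasDerivAt (fun y : ℝ => Complex.sin (s*((y:ℂ)+1)))
      (Complex.cos (s*((y:ℂ)+1)) * s) y := by
    intro y
    have h1 : HasDerivAt (fun y : ℝ => s * ((y:ℂ)+1)) s y := by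
      simpa using ((Complex.ofRealCLM.hasDerivAt (x := y)).add_const 1).const_mul s
    have h2 := ((Complex.hasDerivAt_sin (s*((y:ℂ)+1))).hasFDerivAt.restrictScalars
      ℝ).comp_hasDerivAt y h1
    exact h2.congr_deriv (by simp [mul_comm])
  have hg : ∀ y : ℝ, HasDerivAt (fun y : ℝ => (α₂:ℂ) * Complex.cos (s*((y:ℂ)+1)))
      ((α₂:ℂ) * (-Complex.sin (s*((y:ℂ)+1)) * s)) y := fun y => (hcos y).const_mul _
  have hg' : ∀ y : ℝ, HasDerivAt (fun y : ℝ => (α₂:ℂ) * (-Complex.sin (s*((y:ℂ)+1)) * s))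
      (-(s^2) * ((α₂:ℂ) * Complex.cos (s*((y:ℂ)+1)))) y := by
    intro y
    have heq : (fun y : ℝ => (α₂:ℂ) * (-Complex.sin (s*((y:ℂ)+1)) * s))
        = fun y : ℝ => (-(α₂:ℂ) * s) * Complex.sin (s*((y:ℂ)+1)) := by
      funext z; ring
    rw [heq]
    have h2 := (hsin y).const_mul (-(α₂:ℂ) * s)
    refine h2.congr_deriv ?_
    ring
  have hf : ∀ y ∈ Icc (-1:ℝ) 1,
      HasDerivAt (fun y => φ s y - (α₂:ℂ) * Complex.cos (s*((y:ℂ)+1)))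
        (φ' s y - (α₂:ℂ) * (-Complex.sin (s*((y:ℂ)+1)) * s)) y :=
    fun y hy => (hφ s y hy).sub (hg y)
  have hfp : ∀ y ∈ Icc (-1:ℝ) 1,
      HasDerivAt (fun y => φ' s y - (α₂:ℂ) * (-Complex.sin (s*((y:ℂ)+1)) * s))
        (φ'' s y + s^2 * ((α₂:ℂ) * Complex.cos (s*((y:ℂ)+1)))) y := by
    intro y hy
    have := (hφ' s y hy).sub (hg' y)
    refine this.congr_deriv ?_
    ring
  -- energy bound for the difference
  have hFBbound : ∀ y ∈ Ioo (-1:ℝ) 1,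
      (s.re^2+s.im^2)*(2*(((fun y => φ s y - (α₂:ℂ) * Complex.cos (s*((y:ℂ)+1))) y).re
            *((fun y => φ' s y - (α₂:ℂ) * (-Complex.sin (s*((y:ℂ)+1)) * s)) y).re)
          + 2*(((fun y => φ s y - (α₂:ℂ) * Complex.cos (s*((y:ℂ)+1))) y).im
            *((fun y => φ' s y - (α₂:ℂ) * (-Complex.sin (s*((y:ℂ)+1)) * s)) y).im))
        + (2*(((fun y => φ' s y - (α₂:ℂ) * (-Complex.sin (s*((y:ℂ)+1)) * s)) y).re
            *(φ'' s y + s^2 * ((α₂:ℂ) * Complex.cos (s*((y:ℂ)+1)))).re)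
          + 2*(((fun y => φ' s y - (α₂:ℂ) * (-Complex.sin (s*((y:ℂ)+1)) * s)) y).im
            *(φ'' s y + s^2 * ((α₂:ℂ) * Complex.cos (s*((y:ℂ)+1)))).im))
      ≤ c * ((s.re^2+s.im^2)*(((fun y => φ s y - (α₂:ℂ) * Complex.cos (s*((y:ℂ)+1))) y).re^2
            +((fun y => φ s y - (α₂:ℂ) * Complex.cos (s*((y:ℂ)+1))) y).im^2)
          + (((fun y => φ' s y - (α₂:ℂ) * (-Complex.sin (s*((y:ℂ)+1)) * s)) y).re^2
            +((fun y => φ' s y - (α₂:ℂ) * (-Complex.sin (s*((y:ℂ)+1)) * s)) y).im^2))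
        + (M^2*K2) * Real.exp (c*(y+1)) := by
    intro y hy
    simp only []
    have hyI := Ioo_subset_Icc_self hy
    have hq2 := hqM y hyI
    have hW : φ'' s y + s^2 * ((α₂:ℂ) * Complex.cos (s*((y:ℂ)+1)))
        = (q y:ℂ) * φ s y - s^2 * (φ s y - (α₂:ℂ) * Complex.cos (s*((y:ℂ)+1))) := by
      rw [hppf y hyI]; ring
    have key := energy_bound2 s (q y) M T (K2 * Real.exp (2*T*(y+1)))
      (φ s y) (φ s y - (α₂:ℂ) * Complex.cos (s*((y:ℂ)+1)))
      (φ' s y - (α₂:ℂ) * (-Complex.sin (s*((y:ℂ)+1)) * s))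
      (φ'' s y + s^2 * ((α₂:ℂ) * Complex.cos (s*((y:ℂ)+1))))
      hq2 hTdef hW (huB y hyI) (by positivity)
    have hexple : Real.exp (2*T*(y+1)) ≤ Real.exp (c*(y+1)) := by
      apply Real.exp_le_exp.mpr
      rw [hcdef]
      linarith [hy.1]
    have hMu2 : M^2*(K2 * Real.exp (2*T*(y+1))) ≤ M^2*K2 * Real.exp (c*(y+1)) := by
      have := mul_le_mul_of_nonneg_left hexple
        (by positivity : (0:ℝ) ≤ M^2*K2)
      linarith [this]
    have hFBnn : (0:ℝ) ≤ (s.re^2+s.im^2)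
          *((φ s y - (α₂:ℂ) * Complex.cos (s*((y:ℂ)+1))).re^2
            +(φ s y - (α₂:ℂ) * Complex.cos (s*((y:ℂ)+1))).im^2)
        + ((φ' s y - (α₂:ℂ) * (-Complex.sin (s*((y:ℂ)+1)) * s)).re^2
            +(φ' s y - (α₂:ℂ) * (-Complex.sin (s*((y:ℂ)+1)) * s)).im^2) := by positivity
    rw [hcdef]
    rw [hcdef] at hMu2
    linarith [key, hMu2, hFBnn]
  have hFBfin := decay (fun y hy => energy_hasDerivAt (s.re^2+s.im^2) (hf y hy) (hfp y hy))
    hFBbound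
  have hcos0 : Complex.cos (s*(((-1:ℝ):ℂ)+1)) = 1 := by norm_num
  have hsin0 : Complex.sin (s*(((-1:ℝ):ℂ)+1)) = 0 := by norm_num
  have h1 := hFBfin x hx
  simp only [hinit s, hinit' s, hcos0, hsin0, mul_one, mul_zero, zero_mul, neg_zero,
    sub_self, sub_zero, Complex.zero_re, Complex.zero_im, Complex.neg_re, Complex.neg_im,
    Complex.ofReal_re, Complex.ofReal_im] at h1
  have hxx1 : (0:ℝ) ≤ x + 1 := by linarith [hx.1]
  have hxx2 : x + 1 ≤ 2 := by linarith [hx.2]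
  have hexple : Real.exp (c*(x+1)) ≤ Real.exp 4 * Real.exp (2*T*(x+1)) := by
    rw [← Real.exp_add]
    apply Real.exp_le_exp.mpr
    rw [hcdef]
    linarith [mul_le_mul_of_nonneg_left hxx2 hT0]
  have hMK2nn : (0:ℝ) ≤ M^2*K2 := by positivity
  have hcoef : ((s.re^2+s.im^2)*(0^2+0^2) + ((-α₁)^2+0^2)) + M^2*K2*(x+1)
      ≤ α₁^2 + 2*(M^2*K2) := by
    linarith [mul_nonneg (by linarith : (0:ℝ) ≤ 2-(x+1)) hMK2nn]
  have hcoefnn : (0:ℝ) ≤ ((s.re^2+s.im^2)*(0^2+0^2) + ((-α₁)^2+0^2)) + M^2*K2*(x+1) := by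
    positivity
  have hFx : (s.re^2+s.im^2)*((φ s x - (α₂:ℂ) * Complex.cos (s*((x:ℂ)+1))).re^2
        +(φ s x - (α₂:ℂ) * Complex.cos (s*((x:ℂ)+1))).im^2)
      ≤ C1 * Real.exp (2*T*(x+1)) := by
    have h2 : (((s.re^2+s.im^2)*(0^2+0^2) + ((-α₁)^2+0^2)) + M^2*K2*(x+1))
          * Real.exp (c*(x+1))
        ≤ (α₁^2 + 2*(M^2*K2)) * (Real.exp 4 * Real.exp (2*T*(x+1))) :=
      mul_le_mul hcoef hexple (Real.exp_pos _).le (by positivity)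
    have h3 : (α₁^2 + 2*(M^2*K2)) * (Real.exp 4 * Real.exp (2*T*(x+1)))
        = C1 * Real.exp (2*T*(x+1)) := by rw [hC1def]; ring
    have h4 : (0:ℝ) ≤ (φ' s x - (α₂:ℂ) * (-Complex.sin (s*((x:ℂ)+1)) * s)).re^2
        +(φ' s x - (α₂:ℂ) * (-Complex.sin (s*((x:ℂ)+1)) * s)).im^2 := by positivity
    linarith [h1, h2, h3.le, h3.ge, h4]
  -- turn the square bound into the norm bound
  have hNNpos : (0:ℝ) < s.re^2+s.im^2 := by linarith [hNN1]
  have hR2 : (Real.sqrt C1 * ‖s‖⁻¹ * Real.exp (T*(x+1)))^2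
      = C1 * Real.exp (2*T*(x+1)) / (s.re^2+s.im^2) := by
    rw [mul_pow, mul_pow, Real.sq_sqrt hC1.le, inv_pow, hN2]
    have : Real.exp (T*(x+1)) ^ 2 = Real.exp (2*T*(x+1)) := by
      rw [sq, ← Real.exp_add]
      congr 1
      ring
    rw [this]
    ring
  have hsq : ‖φ s x - (α₂:ℂ) * Complex.cos (s*((x:ℂ)+1))‖^2
      ≤ (Real.sqrt C1 * ‖s‖⁻¹ * Real.exp (T*(x+1)))^2 := by
    rw [normsq_complex, hR2, le_div_iff₀ hNNpos]
    linarith [hFx]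
  have hRnn : (0:ℝ) ≤ Real.sqrt C1 * ‖s‖⁻¹ * Real.exp (T*(x+1)) := by positivity
  calc ‖φ s x - (α₂:ℂ) * Complex.cos (s*((x:ℂ)+1))‖
      = Real.sqrt (‖φ s x - (α₂:ℂ) * Complex.cos (s*((x:ℂ)+1))‖^2) :=
        (Real.sqrt_sq (norm_nonneg _)).symm
    _ ≤ Real.sqrt ((Real.sqrt C1 * ‖s‖⁻¹ * Real.exp (T*(x+1)))^2) := Real.sqrt_le_sqrt hsq
    _ = Real.sqrt C1 * ‖s‖⁻¹ * Real.exp (T*(x+1)) := Real.sqrt_sq hRnn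
end

section
/- Let q be continuous on [−1,1], s ∈ ℂ with t = Im s, and φ the solution of −u'' + qu = s²u with φ(−1) = 0, φ'(−1) = −α₁, α₁ ≠ 0. Then there exist constants C, S₀ > 0 such that for all |s| ≥ S₀ and all x ∈ [−1,1]: |φ(x) + (α₁/s) sin(s(x+1))| ≤ C·|s|⁻²·e^{|t|(x+1)}. -/
open Complex

lemma my_norm_sin_le (z : ℂ) : ‖Complex.sin z‖ ≤ Real.exp |z.im| := by
  rw [Complex.sin]
  have h1 : ‖Complex.exp (-z * I)‖ = Real.exp (z.im) := by
    rw [Complex.norm_exp]; simp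
  have h2 : ‖Complex.exp (z * I)‖ = Real.exp (-z.im) := by
    rw [Complex.norm_exp]; simp
  calc ‖(Complex.exp (-z * I) - Complex.exp (z * I)) * I / 2‖
      = ‖Complex.exp (-z * I) - Complex.exp (z * I)‖ / 2 := by
        rw [norm_div, norm_mul]; simp
    _ ≤ (Real.exp z.im + Real.exp (-z.im)) / 2 := by
        rw [← h1, ← h2]
        gcongr
        exact norm_sub_le _ _
    _ ≤ Real.exp |z.im| := by
        have := abs_nonneg z.im
        have h3 : Real.exp z.im ≤ Real.exp |z.im| := Real.exp_le_exp.2 (le_abs_self _)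
        have h4 : Real.exp (-z.im) ≤ Real.exp |z.im| := Real.exp_le_exp.2 (neg_le_abs _)
        linarith

lemma key_identity (q : ℝ → ℝ) (hq : ContinuousOn q (Set.Icc (-1) 1))
    (α₁ : ℝ) (f f' f'' : ℝ → ℂ) (s : ℂ) (hs : s ≠ 0)
    (hf : ∀ x ∈ Set.Icc (-1:ℝ) 1, HasDerivAt f (f' x) x)
    (hf' : ∀ x ∈ Set.Icc (-1:ℝ) 1, HasDerivAt f' (f'' x) x)
    (hode : ∀ x ∈ Set.Icc (-1:ℝ) 1, -f'' x + (q x : ℂ) * f x = s^2 * f x)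
    (hinit : f (-1) = 0) (hinit' : f' (-1) = -(α₁:ℂ))
    (x : ℝ) (hx : x ∈ Set.Icc (-1:ℝ) 1) :
    f x + ((α₁:ℂ)/s) * Complex.sin (s*(x+1))
      = s⁻¹ * ∫ τ in (-1:ℝ)..x, (q τ : ℂ) * f τ * Complex.sin (s*((x:ℂ) - τ)) := by
  have hxI : Set.uIcc (-1:ℝ) x = Set.Icc (-1) x := Set.uIcc_of_le hx.1
  have hsub : Set.Icc (-1:ℝ) x ⊆ Set.Icc (-1) 1 := Set.Icc_subset_Icc le_rfl hx.2
  set F : ℝ → ℂ := fun τ => f' τ * Complex.sin (s*((x:ℂ) - τ)) / s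
      + f τ * Complex.cos (s*((x:ℂ) - τ)) with hF
  have hg : ∀ τ : ℝ, HasDerivAt (fun w:ℝ => s * ((x:ℂ) - (w:ℂ))) (-s) τ := by
    intro τ
    have : HasDerivAt (fun w:ℂ => s * ((x:ℂ) - w)) (-s) (τ:ℂ) := by
      simpa using (((hasDerivAt_id (τ:ℂ)).const_sub (x:ℂ)).const_mul s)
    exact this.comp_ofReal
  have hD : ∀ τ ∈ Set.uIcc (-1:ℝ) x,
      HasDerivAt F ((q τ:ℂ) * f τ * Complex.sin (s*((x:ℂ) - τ)) / s) τ := by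
    intro τ hτ
    rw [hxI] at hτ
    have hτ2 := hsub hτ
    have hgC : HasDerivAt (fun w:ℂ => s * ((x:ℂ) - w)) (-s) (τ:ℂ) := by
      simpa using (((hasDerivAt_id (τ:ℂ)).const_sub (x:ℂ)).const_mul s)
    have hS : HasDerivAt (fun w:ℝ => Complex.sin (s*((x:ℂ) - w)))
        (Complex.cos (s*((x:ℂ) - τ)) * (-s)) τ := hgC.csin.comp_ofReal
    have hC : HasDerivAt (fun w:ℝ => Complex.cos (s*((x:ℂ) - w)))
        (-Complex.sin (s*((x:ℂ) - τ)) * (-s)) τ := hgC.ccos.comp_ofReal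
    have hcomb := ((((hf' τ hτ2).mul hS).div_const s).add ((hf τ hτ2).mul hC))
    refine hcomb.congr_deriv ?_
    have hode' : f'' τ = (q τ:ℂ) * f τ - s^2 * f τ := by
      linear_combination -(hode τ hτ2)
    rw [hode']
    field_simp
    ring
  have hcontf : ContinuousOn f (Set.Icc (-1:ℝ) 1) :=
    fun y hy => (hf y hy).continuousAt.continuousWithinAt
  have hcontS : Continuous (fun τ:ℝ => Complex.sin (s*((x:ℂ) - τ))) := by
    fun_prop
  have hint : IntervalIntegrable
      (fun τ => (q τ:ℂ) * f τ * Complex.sin (s*((x:ℂ) - τ)) / s)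
      MeasureTheory.volume (-1) x := by
    apply ContinuousOn.intervalIntegrable
    rw [hxI]
    apply ContinuousOn.div_const
    exact (((Complex.continuous_ofReal.comp_continuousOn (hq.mono hsub)).mul
      (hcontf.mono hsub)).mul hcontS.continuousOn)
  have hFTC := intervalIntegral.integral_eq_sub_of_hasDerivAt hD hint
  have hFx : F x = f x := by
    simp [hF]
  have hFm1 : F (-1) = -(α₁:ℂ) * Complex.sin (s*((x:ℂ)+1)) / s := by
    simp [hF, hinit, hinit']
  rw [hFx, hFm1] at hFTC
  rw [intervalIntegral.integral_div] at hFTC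
  field_simp at hFTC ⊢
  linear_combination -hFTC

/-- Asymptotics of the fundamental solution when `α₂ = 0`, `α₁ ≠ 0`: if for
each `s` the function `φ s` solves `−u'' + qu = s²u` with `φ(−1) = 0`,
`φ'(−1) = −α₁`, then `φ(x) = −(α₁/s) sin(s(x+1)) + O(|s|⁻² e^{|Im s|(x+1)})`
uniformly on `[−1,1]`. -/
theorem solution_asymptotics_alpha2_eq_zero
    (q : ℝ → ℝ) (hq : ContinuousOn q (Set.Icc (-1) 1))
    (α₁ : ℝ) (hα₁ : α₁ ≠ 0)
    (φ φ' φ'' : ℂ → ℝ → ℂ)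
    (hφ : ∀ s, ∀ x ∈ Set.Icc (-1:ℝ) 1, HasDerivAt (φ s) (φ' s x) x)
    (hφ' : ∀ s, ∀ x ∈ Set.Icc (-1:ℝ) 1, HasDerivAt (φ' s) (φ'' s x) x)
    (hode : ∀ s, ∀ x ∈ Set.Icc (-1:ℝ) 1,
      -φ'' s x + (q x : ℂ) * φ s x = s ^ 2 * φ s x)
    (hinit : ∀ s, φ s (-1) = 0) (hinit' : ∀ s, φ' s (-1) = -(α₁ : ℂ)) :
    ∃ C S₀ : ℝ, 0 < C ∧ 0 < S₀ ∧
      ∀ s : ℂ, S₀ ≤ ‖s‖ → ∀ x ∈ Set.Icc (-1:ℝ) 1,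
        ‖φ s x + ((α₁ : ℂ) / s) * Complex.sin (s * (x + 1))‖
          ≤ C * (‖s‖⁻¹) ^ 2 * Real.exp (|s.im| * (x + 1)) := by
  obtain ⟨M0, hM0⟩ := (isCompact_Icc).exists_bound_of_continuousOn hq
  set M : ℝ := max M0 0 with hM
  have hMnn : 0 ≤ M := le_max_right _ _
  have hqM : ∀ x ∈ Set.Icc (-1:ℝ) 1, |q x| ≤ M := fun x hx =>
    le_trans (hM0 x hx) (le_max_left _ _)
  refine ⟨4*M*|α₁| + 1, max 1 (4*M), by positivity, lt_max_of_lt_left one_pos, ?_⟩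
  intro s hs x hx
  have hs1 : (1:ℝ) ≤ ‖s‖ := le_trans (le_max_left _ _) hs
  have hs4M : 4*M ≤ ‖s‖ := le_trans (le_max_right _ _) hs
  have hspos : (0:ℝ) < ‖s‖ := lt_of_lt_of_le one_pos hs1
  have hsne : s ≠ 0 := by
    intro h; rw [h] at hspos; simp at hspos
  set t : ℝ := |s.im| with ht
  have htnn : 0 ≤ t := abs_nonneg _
  -- continuity of φ s
  have hcontf : ContinuousOn (φ s) (Set.Icc (-1:ℝ) 1) :=
    fun y hy => (hφ s y hy).continuousAt.continuousWithinAt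
  -- the max of G
  set G : ℝ → ℝ := fun τ => ‖φ s τ‖ * Real.exp (-(t*(τ+1))) with hG
  have hcontG : ContinuousOn G (Set.Icc (-1:ℝ) 1) := by
    apply ContinuousOn.mul hcontf.norm
    fun_prop
  obtain ⟨x₀, hx₀, hmax⟩ := (isCompact_Icc).exists_isMaxOn
    (Set.nonempty_Icc.2 (by norm_num)) hcontG
  set K : ℝ := G x₀ with hK
  have hKnn : 0 ≤ K := mul_nonneg (norm_nonneg _) (Real.exp_pos _).le
  have hGK : ∀ τ ∈ Set.Icc (-1:ℝ) 1, ‖φ s τ‖ ≤ K * Real.exp (t*(τ+1)) := by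
    intro τ hτ
    have h1 : G τ ≤ K := hmax hτ
    have h2 : ‖φ s τ‖ = G τ * Real.exp (t*(τ+1)) := by
      rw [hG]
      simp only []
      rw [mul_assoc, ← Real.exp_add]
      simp
    rw [h2]
    gcongr
  -- bound on sin kernel
  have hker : ∀ y : ℝ, 0 ≤ y → ‖Complex.sin (s * y)‖ ≤ Real.exp (t * y) := by
    intro y hy
    have := my_norm_sin_le (s * y)
    have him : |(s * (y:ℂ)).im| = t * y := by
      have h : (s * (y:ℂ)).im = s.im * y := by simp [Complex.mul_im]
      rw [h, abs_mul, _root_.abs_of_nonneg hy]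
    rwa [him] at this
  -- main estimate
  have main_est : ∀ x ∈ Set.Icc (-1:ℝ) 1,
      ‖φ s x + ((α₁:ℂ)/s) * Complex.sin (s*(x+1))‖
        ≤ ‖s‖⁻¹ * (M * K * Real.exp (t*(x+1))) * (x+1) := by
    intro x hx
    rw [key_identity q hq α₁ (φ s) (φ' s) (φ'' s) s hsne (hφ s) (hφ' s)
      (hode s) (hinit s) (hinit' s) x hx]
    rw [norm_mul, norm_inv]
    have hbound : ∀ τ ∈ Set.uIoc (-1:ℝ) x,
        ‖(q τ : ℂ) * φ s τ * Complex.sin (s*((x:ℂ) - τ))‖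
          ≤ M * K * Real.exp (t*(x+1)) := by
      intro τ hτ
      rw [Set.uIoc_of_le hx.1] at hτ
      have hτI : τ ∈ Set.Icc (-1:ℝ) 1 := ⟨hτ.1.le, le_trans hτ.2 hx.2⟩
      have h1 : ‖(q τ : ℂ)‖ ≤ M := by
        rw [Complex.norm_real, Real.norm_eq_abs]; exact hqM τ hτI
      have h2 : ‖φ s τ‖ ≤ K * Real.exp (t*(τ+1)) := hGK τ hτI
      have h3 : ‖Complex.sin (s*((x:ℂ) - τ))‖ ≤ Real.exp (t*(x - τ)) := by
        have : ((x:ℂ) - τ) = ((x - τ : ℝ) : ℂ) := by push_cast; ring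
        rw [this]
        exact hker (x - τ) (by linarith [hτ.2])
      calc ‖(q τ : ℂ) * φ s τ * Complex.sin (s*((x:ℂ) - τ))‖
          = ‖(q τ : ℂ)‖ * ‖φ s τ‖ * ‖Complex.sin (s*((x:ℂ) - τ))‖ := by
            rw [norm_mul, norm_mul]
        _ ≤ M * (K * Real.exp (t*(τ+1))) * Real.exp (t*(x - τ)) :=
            mul_le_mul (mul_le_mul h1 h2 (norm_nonneg _) hMnn) h3 (norm_nonneg _)
              (by positivity)
        _ = M * K * (Real.exp (t*(τ+1)) * Real.exp (t*(x - τ))) := by ring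
        _ = M * K * Real.exp (t*(x+1)) := by
            rw [← Real.exp_add]
            have h : t*(τ+1) + t*(x-τ) = t*(x+1) := by ring
            rw [h]
    have := intervalIntegral.norm_integral_le_of_norm_le_const hbound
    have habs : |x - (-1)| = x + 1 := by
      rw [_root_.abs_of_nonneg (by linarith [hx.1] : (0:ℝ) ≤ x - (-1))]
      ring
    rw [habs] at this
    calc ‖s‖⁻¹ * ‖∫ τ in (-1:ℝ)..x, (q τ : ℂ) * φ s τ * Complex.sin (s*((x:ℂ) - τ))‖
        ≤ ‖s‖⁻¹ * (M * K * Real.exp (t*(x+1)) * (x+1)) := by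
          gcongr
      _ = ‖s‖⁻¹ * (M * K * Real.exp (t*(x+1))) * (x+1) := by ring
  -- a priori bound: K ≤ 2|α₁|/‖s‖
  have hsin1 : ∀ x ∈ Set.Icc (-1:ℝ) 1,
      ‖((α₁:ℂ)/s) * Complex.sin (s*((x:ℂ)+1))‖ ≤ |α₁| * ‖s‖⁻¹ * Real.exp (t*(x+1)) := by
    intro x hx
    rw [norm_mul, norm_div]
    have : ((x:ℂ) + 1) = ((x + 1 : ℝ) : ℂ) := by push_cast; ring
    rw [this]
    have h := hker (x+1) (by linarith [hx.1])
    calc ‖(α₁:ℂ)‖ / ‖s‖ * ‖Complex.sin (s * ((x+1:ℝ):ℂ))‖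
        ≤ |α₁| / ‖s‖ * Real.exp (t*(x+1)) := by
          rw [Complex.norm_real, Real.norm_eq_abs]
          gcongr
      _ = |α₁| * ‖s‖⁻¹ * Real.exp (t*(x+1)) := by ring
  have hKbound : K ≤ 2 * |α₁| * ‖s‖⁻¹ := by
    have h1 : ‖φ s x₀‖ ≤ ‖s‖⁻¹ * (M * K * Real.exp (t*(x₀+1))) * (x₀+1)
        + |α₁| * ‖s‖⁻¹ * Real.exp (t*(x₀+1)) := by
      calc ‖φ s x₀‖ ≤ ‖φ s x₀ + ((α₁:ℂ)/s) * Complex.sin (s*(x₀+1))‖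
          + ‖((α₁:ℂ)/s) * Complex.sin (s*((x₀:ℂ)+1))‖ := by
            have h := norm_add_le (φ s x₀ + ((α₁:ℂ)/s) * Complex.sin (s*((x₀:ℂ)+1)))
              (-(((α₁:ℂ)/s) * Complex.sin (s*((x₀:ℂ)+1))))
            simpa using h
        _ ≤ _ := add_le_add (main_est x₀ hx₀) (hsin1 x₀ hx₀)
    -- so K = ‖φ s x₀‖ exp(-(t(x₀+1))) ≤ ...
    have hexp : Real.exp (t*(x₀+1)) * Real.exp (-(t*(x₀+1))) = 1 := by
      rw [← Real.exp_add]; simp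
    have hKeq : K = ‖φ s x₀‖ * Real.exp (-(t*(x₀+1))) := rfl
    have hepos : (0:ℝ) < Real.exp (-(t*(x₀+1))) := Real.exp_pos _
    have h2 : K ≤ (‖s‖⁻¹ * (M * K) * (x₀+1) + |α₁| * ‖s‖⁻¹)
        * (Real.exp (t*(x₀+1)) * Real.exp (-(t*(x₀+1)))) := by
      rw [hKeq]
      calc ‖φ s x₀‖ * Real.exp (-(t*(x₀+1)))
          ≤ (‖s‖⁻¹ * (M * K * Real.exp (t*(x₀+1))) * (x₀+1)
            + |α₁| * ‖s‖⁻¹ * Real.exp (t*(x₀+1))) * Real.exp (-(t*(x₀+1))) := by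
            gcongr
        _ = (‖s‖⁻¹ * (M * K) * (x₀+1) + |α₁| * ‖s‖⁻¹)
            * (Real.exp (t*(x₀+1)) * Real.exp (-(t*(x₀+1)))) := by ring
    rw [hexp, mul_one] at h2
    -- now K ≤ ‖s‖⁻¹ M K (x₀+1) + |α₁| ‖s‖⁻¹, with (x₀+1) ≤ 2, ‖s‖⁻¹ M ≤ 1/4
    have hx₀2 : x₀ + 1 ≤ 2 := by linarith [hx₀.2]
    have hx₀0 : 0 ≤ x₀ + 1 := by linarith [hx₀.1]
    have hMs : ‖s‖⁻¹ * M ≤ 1/4 := by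
      rw [inv_mul_le_iff₀ hspos]
      linarith
    have h3 : ‖s‖⁻¹ * (M * K) * (x₀+1) ≤ (1/2) * K := by
      calc ‖s‖⁻¹ * (M * K) * (x₀+1) ≤ ‖s‖⁻¹ * (M * K) * 2 := by
            have : 0 ≤ ‖s‖⁻¹ * (M * K) := by positivity
            nlinarith
        _ = (‖s‖⁻¹ * M) * K * 2 := by ring
        _ ≤ (1/4) * K * 2 := by gcongr
        _ = (1/2) * K := by ring
    have hinv : 0 ≤ ‖s‖⁻¹ := inv_nonneg.2 hspos.le
    nlinarith
  -- final
  have h1 := main_est x hx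
  have hx2 : x + 1 ≤ 2 := by linarith [hx.2]
  have hx0 : 0 ≤ x + 1 := by linarith [hx.1]
  have hinv : 0 ≤ ‖s‖⁻¹ := inv_nonneg.2 hspos.le
  calc ‖φ s x + ((α₁:ℂ)/s) * Complex.sin (s*((x:ℂ)+1))‖
      ≤ ‖s‖⁻¹ * (M * K * Real.exp (t*(x+1))) * (x+1) := h1
    _ ≤ ‖s‖⁻¹ * (M * (2 * |α₁| * ‖s‖⁻¹) * Real.exp (t*(x+1))) * 2 := by
        gcongr
    _ = (4*M*|α₁|) * (‖s‖⁻¹)^2 * Real.exp (t*(x+1)) := by ring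
    _ ≤ (4*M*|α₁| + 1) * (‖s‖⁻¹)^2 * Real.exp (t*(x+1)) := by
        gcongr
        linarith
end
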